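/- Let m = (m_1, ..., m_n) be positive integers and Ω = {z ∈ ℂ^n : Σ|z_i|^{2m_i} < 1}. For every multi-index α ∈ ℕ^n, ∫_Ω |z^α|² dV(z) = π^n ∏_{i=1}^n Γ((α_i+1)/m_i) / ((∏_{i=1}^n m_i) · Γ(Σ_{i=1}^n (α_i+1)/m_i + 1)). -/

import Mathlib

open MeasureTheory Complex Set
open scoped ENNReal NNReal Real

lemma aux_pi_smul {ι : Type*} [Fintype ι] {X : ι → Type*} [∀ i, MeasurableSpace (X i)]
    (μ : ∀ i, Measure (X i)) [∀ i, SigmaFinite (μ i)] (d : ι → ℝ≥0) :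
    Measure.pi (fun i => d i • μ i) = (∏ i, d i) • Measure.pi μ := by
  refine Measure.pi_eq fun s hs => ?_
  simp only [Measure.pi_pi, Measure.smul_apply, ENNReal.smul_def, smul_eq_mul, Finset.prod_mul_distrib,
    ENNReal.coe_finset_prod]

lemma aux_smul_coe {X : Type*} [MeasurableSpace X] (r : ℝ≥0) (μ : Measure X) :
    (r • μ) = ((r : ℝ≥0∞) • μ) := by
  ext s hs
  simp only [Measure.smul_apply, ENNReal.smul_def]

lemma aux_integrable (a k : ℕ) (hk : 1 ≤ k) :
    Integrable (fun x : ℂ => ‖x‖ ^ (2 * a) * Real.exp (-(‖x‖ ^ (2 * k)))) := by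
  have hg : Integrable (fun x : ℂ => Real.exp (-(1/2) * ‖x‖ ^ 2)) := by
    have h := (GaussianFourier.integrable_cexp_neg_mul_sq_norm_add
      (b := (1/2 : ℂ)) (by norm_num) 0 (0 : ℂ)).norm
    refine h.congr (Filter.Eventually.of_forall fun v => ?_)
    show ‖cexp _‖ = _
    rw [Complex.norm_exp]
    congr 1
    simp [← Complex.ofReal_pow]
  refine ((hg.const_mul ((2 * a).factorial * Real.exp (3/2))).mono'
    (((continuous_norm.pow _).mul
      ((Real.continuous_exp.comp (continuous_norm.pow _).neg))).aestronglyMeasurable)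
    (Filter.Eventually.of_forall fun x => ?_))
  set t := ‖x‖ with ht
  have h0 : 0 ≤ t := norm_nonneg x
  have h1 : t ^ (2 * a) ≤ (2 * a).factorial * Real.exp t := by
    have hsum := Real.sum_le_exp_of_nonneg h0 (2 * a + 1)
    have h2 : t ^ (2 * a) / (2 * a).factorial ≤ Real.exp t :=
      le_trans (Finset.single_le_sum (f := fun i => t ^ i / i.factorial)
        (fun i _ => by positivity) (Finset.self_mem_range_succ (2 * a))) hsum
    have hfac : (0:ℝ) < (2 * a).factorial := by exact_mod_cast (2 * a).factorial_pos
    calc t ^ (2 * a) = (t ^ (2 * a) / (2 * a).factorial) * (2 * a).factorial := by field_simp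
    _ ≤ Real.exp t * (2 * a).factorial := by gcongr
    _ = (2 * a).factorial * Real.exp t := by ring
  have h2 : Real.exp t * Real.exp (-(t ^ (2 * k))) ≤
      Real.exp (3/2) * Real.exp (-(1/2) * t ^ 2) := by
    rw [← Real.exp_add, ← Real.exp_add]
    apply Real.exp_le_exp.mpr
    rcases le_or_gt t 1 with h | h
    · have ht2 : t ^ 2 ≤ 1 := pow_le_one₀ h0 h
      have htk : (0:ℝ) ≤ t ^ (2 * k) := pow_nonneg h0 _
      nlinarith
    · have htk : t ^ 2 ≤ t ^ (2 * k) := pow_le_pow_right₀ h.le (by omega)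
      nlinarith [sq_nonneg (t - 1)]
  have hnorm : ‖‖x‖ ^ (2 * a) * Real.exp (-(‖x‖ ^ (2 * k)))‖
      = t ^ (2 * a) * Real.exp (-(t ^ (2 * k))) := by
    rw [Real.norm_eq_abs, _root_.abs_of_nonneg (by positivity)]
  rw [hnorm]
  calc t ^ (2 * a) * Real.exp (-(t ^ (2 * k)))
      ≤ ((2 * a).factorial * Real.exp t) * Real.exp (-(t ^ (2 * k))) := by
        gcongr
    _ = (2 * a).factorial * (Real.exp t * Real.exp (-(t ^ (2 * k)))) := by ring
    _ ≤ (2 * a).factorial * (Real.exp (3/2) * Real.exp (-(1/2) * t ^ 2)) := by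
        gcongr
    _ = ↑(2 * a).factorial * Real.exp (3/2) * Real.exp (-(1/2) * t ^ 2) := by ring

lemma aux_intC (a k : ℕ) (hk : 1 ≤ k) :
    ∫ x : ℂ, ‖x‖ ^ (2 * a) * Real.exp (-(‖x‖ ^ (2 * k))) =
      (Real.pi / k) * Real.Gamma (((a : ℝ) + 1) / k) := by
  have hk0 : (k : ℝ) ≠ 0 := Nat.cast_ne_zero.mpr (by omega)
  have key : (fun x : ℂ => ‖x‖ ^ (2 * a) * Real.exp (-(‖x‖ ^ (2 * k))))
      = fun x : ℂ => ‖x‖ ^ ((2 * a : ℕ) : ℝ) * Real.exp (-‖x‖ ^ ((2 * k : ℕ) : ℝ)) := by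
    funext x
    rw [Real.rpow_natCast, Real.rpow_natCast]
  rw [key, Complex.integral_rpow_mul_exp_neg_rpow (by exact_mod_cast by omega)
    (lt_of_lt_of_le (by norm_num) (Nat.cast_nonneg _) : (-2:ℝ) < ((2*a:ℕ):ℝ))]
  have h1 : (2 * Real.pi / ((2*k:ℕ):ℝ)) = Real.pi / k := by push_cast; field_simp
  have h2 : (((2*a:ℕ):ℝ) + 2) / ((2*k:ℕ):ℝ) = ((a:ℝ)+1)/k := by push_cast; field_simp
  rw [h1, h2]

open MeasureTheory Complex

theorem stmt_9 (n : ℕ) (m : Fin n → ℕ) (hm : ∀ i, 0 < m i) (α : Fin n → ℕ) :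
    ∫ z : Fin n → ℂ in {z : Fin n → ℂ | ∑ i, ‖z i‖ ^ (2 * m i) < 1},
      ‖∏ i, z i ^ α i‖ ^ 2 =
    Real.pi ^ n * (∏ i, Real.Gamma (((α i : ℝ) + 1) / (m i : ℝ))) /
      ((∏ i, (m i : ℝ)) * Real.Gamma ((∑ i, ((α i : ℝ) + 1) / (m i : ℝ)) + 1)) := by
  classical
  set F : (Fin n → ℂ) → ℝ := fun z => ∏ i, ‖z i‖ ^ (2 * α i) with hF
  set g : (Fin n → ℂ) → ℝ := fun z => ∑ i, ‖z i‖ ^ (2 * m i) with hgdef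
  set a : Fin n → ℝ := fun i => ((α i : ℝ) + 1) / (m i : ℝ) with ha
  set s : ℝ := ∑ i, a i with hs
  have hm0 : ∀ i, (m i : ℝ) ≠ 0 := fun i => Nat.cast_ne_zero.mpr (hm i).ne'
  have hFc : Continuous F :=
    continuous_finset_prod _ fun i _ => (continuous_norm.comp (continuous_apply i)).pow _
  have hgc : Continuous g :=
    continuous_finset_sum _ fun i _ => (continuous_norm.comp (continuous_apply i)).pow _
  have hF0 : ∀ z, 0 ≤ F z := fun z =>
    Finset.prod_nonneg fun i _ => pow_nonneg (norm_nonneg _) _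
  have hg0 : ∀ z, 0 ≤ g z := fun z =>
    Finset.sum_nonneg fun i _ => pow_nonneg (norm_nonneg _) _
  have hs0 : 0 ≤ s := Finset.sum_nonneg fun i _ => by positivity
  set G : (Fin n → ℂ) → ℝ≥0∞ := fun z => ENNReal.ofReal (F z) with hG
  have hGm : Measurable G := ENNReal.measurable_ofReal.comp hFc.measurable
  set I : ℝ≥0∞ := ∫⁻ z in {z | g z < 1}, G z with hI
  have hmeas : ∀ t : ℝ, MeasurableSet {z : Fin n → ℂ | g z < t} := fun t =>
    measurableSet_lt hgc.measurable measurable_const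
  -- scaling
  have hscale : ∀ t : ℝ, 0 < t →
      ∫⁻ z in {z | g z < t}, G z = ENNReal.ofReal (t ^ s) * I := by
    intro t ht
    set c : Fin n → ℝ := fun i => t ^ (((2 * m i : ℕ) : ℝ))⁻¹ with hc
    have hc0 : ∀ i, 0 < c i := fun i => Real.rpow_pos_of_pos ht _
    set T : (Fin n → ℂ) → (Fin n → ℂ) := fun z i => c i • z i with hT
    have hTm : Measurable T :=
      measurable_pi_lambda _ fun i => by exact (measurable_pi_apply i).const_smul (c i)
    have habs : ∀ (i : Fin n) (w : ℂ), ‖c i • w‖ = c i * ‖w‖ := by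
      intro i w
      rw [norm_smul, Real.norm_eq_abs, _root_.abs_of_pos (hc0 i)]
    have hm2 : ∀ i : Fin n, ((2 * m i : ℕ) : ℝ) ≠ 0 := fun i =>
      Nat.cast_ne_zero.mpr (by have := hm i; omega)
    have hcpow : ∀ i, c i ^ (2 * m i) = t := by
      intro i
      simp only [hc]
      rw [← Real.rpow_natCast (t ^ (((2 * m i : ℕ) : ℝ))⁻¹) (2 * m i), ← Real.rpow_mul ht.le,
        inv_mul_cancel₀ (hm2 i), Real.rpow_one]
    have hgT : ∀ x, g (T x) = t * g x := by
      intro x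
      simp only [hgdef, hT, Finset.mul_sum]
      exact Finset.sum_congr rfl fun i _ => by rw [habs, mul_pow, hcpow]
    have hpre : T ⁻¹' {z | g z < t} = {z | g z < 1} := by
      ext x
      simp only [Set.mem_preimage, Set.mem_setOf_eq, hgT]
      exact mul_lt_iff_lt_one_right ht
    have hFT : ∀ x, F (T x) = (∏ i, c i ^ (2 * α i)) * F x := by
      intro x
      simp only [hF, hT]
      rw [← Finset.prod_mul_distrib]
      exact Finset.prod_congr rfl fun i _ => by rw [habs, mul_pow]
    set d : Fin n → ℝ≥0 := fun i => ((c i ^ 2)⁻¹).toNNReal with hd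
    have hdcoe : ∀ i, ((d i : ℝ≥0) : ℝ≥0∞) = ENNReal.ofReal ((c i ^ 2)⁻¹) := fun i => rfl
    have hmap : Measure.map T (volume : Measure (Fin n → ℂ))
        = ((∏ i, d i : ℝ≥0) : ℝ≥0∞) • (volume : Measure (Fin n → ℂ)) := by
      have h1 : ∀ i : Fin n, MeasurePreserving (fun x : ℂ => c i • x) volume (d i • volume) := by
        intro i
        refine ⟨by exact measurable_id.const_smul (c i), ?_⟩
        rw [Measure.map_addHaar_smul volume (hc0 i).ne', Complex.finrank_real_complex,
          _root_.abs_of_nonneg (by positivity : (0:ℝ) ≤ ((c i ^ 2)⁻¹)), aux_smul_coe]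
        rfl
      have h2 := measurePreserving_pi (fun _ : Fin n => (volume : Measure ℂ))
        (fun i => d i • volume) h1
      have h3 : Measure.map T (Measure.pi fun _ : Fin n => (volume : Measure ℂ))
          = Measure.pi (fun i => d i • volume) := h2.map_eq
      rw [volume_pi, h3, aux_pi_smul, aux_smul_coe, ← volume_pi]
    have hd0 : ((∏ i, d i : ℝ≥0) : ℝ≥0∞) ≠ 0 := by
      rw [ENNReal.coe_ne_zero]
      refine (Finset.prod_ne_zero_iff.mpr fun i _ => ?_)
      simp only [hd, ne_eq, Real.toNNReal_eq_zero, not_le]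
      positivity
    have key := setLIntegral_map (μ := (volume : Measure (Fin n → ℂ))) (hmeas t) hGm hTm
    rw [hmap, Measure.restrict_smul, lintegral_smul_measure, hpre] at key
    have hRHS : ∫⁻ x in {z | g z < 1}, G (T x)
        = ENNReal.ofReal (∏ i, c i ^ (2 * α i)) * I := by
      rw [hI, ← lintegral_const_mul _ hGm]
      refine setLIntegral_congr_fun (hmeas 1) (fun x _ => ?_)
      simp only [hG]
      rw [hFT, ENNReal.ofReal_mul (Finset.prod_nonneg fun i _ => by positivity)]
    rw [hRHS] at key
    have hsolve : ∫⁻ z in {z | g z < t}, G z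
        = (((∏ i, d i : ℝ≥0)) : ℝ≥0∞)⁻¹ * (ENNReal.ofReal (∏ i, c i ^ (2 * α i)) * I) := by
      rw [← key, smul_eq_mul, ← mul_assoc, ENNReal.inv_mul_cancel hd0 ENNReal.coe_ne_top, one_mul]
    rw [hsolve, ← mul_assoc]
    congr 1
    have hP : (0:ℝ) < ∏ i, (c i ^ 2)⁻¹ := Finset.prod_pos fun i _ => by positivity
    have hco : ((∏ i, d i : ℝ≥0) : ℝ≥0∞) = ENNReal.ofReal (∏ i, (c i ^ 2)⁻¹) := by
      push_cast [hdcoe]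
      rw [ENNReal.ofReal_prod_of_nonneg fun i _ => by positivity]
    rw [hco, ← ENNReal.ofReal_inv_of_pos hP,
      ← ENNReal.ofReal_mul (by positivity : (0:ℝ) ≤ (∏ i, (c i ^ 2)⁻¹)⁻¹)]
    congr 1
    rw [← Finset.prod_inv_distrib]
    simp only [inv_inv]
    rw [← Finset.prod_mul_distrib]
    have hterm : ∀ i ∈ Finset.univ, c i ^ 2 * c i ^ (2 * α i) = t ^ a i := by
      intro i _
      rw [← pow_add]
      simp only [hc]
      rw [← Real.rpow_natCast (t ^ (((2 * m i : ℕ) : ℝ))⁻¹) (2 + 2 * α i),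
        ← Real.rpow_mul ht.le]
      congr 1
      simp only [ha]
      have h2m : ((2 * m i : ℕ) : ℝ) = 2 * (m i : ℝ) := by push_cast; ring
      rw [h2m]
      push_cast
      field_simp
      ring
    rw [Finset.prod_congr rfl hterm, ← Real.rpow_sum_of_pos ht, hs]
  -- layer cake
  set J : ℝ≥0∞ := ∫⁻ z, G z * ENNReal.ofReal (Real.exp (-(g z))) with hJ
  have hJ1 : J = ENNReal.ofReal (Real.Gamma (s + 1)) * I := by
    have hexp : ∀ z : Fin n → ℂ, ENNReal.ofReal (Real.exp (-(g z)))
        = ∫⁻ t in Ioi (0:ℝ), (Ioi (g z)).indicator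
            (fun t => ENNReal.ofReal (Real.exp (-t))) t := by
      intro z
      have hInt : IntegrableOn (fun t : ℝ => Real.exp (-t)) (Ioi (g z)) := by
        simpa using exp_neg_integrableOn_Ioi (g z) (zero_lt_one)
      calc ENNReal.ofReal (Real.exp (-(g z)))
          = ENNReal.ofReal (∫ t in Ioi (g z), Real.exp (-t)) := by
            rw [integral_exp_neg_Ioi]
        _ = ∫⁻ t in Ioi (g z), ENNReal.ofReal (Real.exp (-t)) :=
            ofReal_integral_eq_lintegral_ofReal hInt
              (ae_of_all _ fun t => (Real.exp_pos _).le)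
        _ = ∫⁻ t in Ioi (0:ℝ), (Ioi (g z)).indicator
              (fun t => ENNReal.ofReal (Real.exp (-t))) t := by
            rw [lintegral_indicator measurableSet_Ioi,
              Measure.restrict_restrict measurableSet_Ioi, Set.Ioi_inter_Ioi,
              max_eq_left (hg0 z)]
    set Φ : (Fin n → ℂ) × ℝ → ℝ≥0∞ := fun p =>
      {q : (Fin n → ℂ) × ℝ | g q.1 < q.2}.indicator
        (fun q => G q.1 * ENNReal.ofReal (Real.exp (-q.2))) p with hΦ
    have hSmeas : MeasurableSet {q : (Fin n → ℂ) × ℝ | g q.1 < q.2} :=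
      measurableSet_lt (hgc.measurable.comp measurable_fst) measurable_snd
    have hΦm : Measurable Φ :=
      ((hGm.comp measurable_fst).mul (ENNReal.measurable_ofReal.comp
        (Real.measurable_exp.comp measurable_snd.neg))).indicator hSmeas
    have h1 : ∀ z, G z * ENNReal.ofReal (Real.exp (-(g z)))
        = ∫⁻ t in Ioi (0:ℝ), Φ (z, t) := by
      intro z
      have hmexp : Measurable fun t : ℝ =>
          (Ioi (g z)).indicator (fun t => ENNReal.ofReal (Real.exp (-t))) t :=
        (ENNReal.measurable_ofReal.comp
          (Real.measurable_exp.comp measurable_neg)).indicator measurableSet_Ioi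
      rw [hexp z, ← lintegral_const_mul _ hmexp]
      congr 1 with t
      by_cases h : g z < t
      · simp [hΦ, Set.indicator_of_mem, h, Set.mem_setOf_eq, Set.mem_Ioi]
      · simp [hΦ, Set.indicator_of_notMem, h, Set.mem_setOf_eq, Set.mem_Ioi]
    have h2 := lintegral_lintegral_swap (μ := (volume : Measure (Fin n → ℂ)))
      (ν := (volume : Measure ℝ).restrict (Ioi (0:ℝ)))
      (f := fun z t => Φ (z, t)) hΦm.aemeasurable
    have h3 : ∀ t : ℝ, ∫⁻ z, Φ (z, t)
        = ENNReal.ofReal (Real.exp (-t)) * ∫⁻ z in {z | g z < t}, G z := by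
      intro t
      have : ∀ z : Fin n → ℂ, Φ (z, t)
          = {z : Fin n → ℂ | g z < t}.indicator
              (fun z => G z * ENNReal.ofReal (Real.exp (-t))) z := by
        intro z
        by_cases h : g z < t
        · simp [hΦ, Set.indicator_of_mem, h, Set.mem_setOf_eq]
        · simp [hΦ, Set.indicator_of_notMem, h, Set.mem_setOf_eq]
      simp_rw [this]
      rw [lintegral_indicator (hmeas t), lintegral_mul_const _ hGm, mul_comm]
    calc J = ∫⁻ z, ∫⁻ t in Ioi (0:ℝ), Φ (z, t) := by
          rw [hJ]; exact lintegral_congr fun z => h1 z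
      _ = ∫⁻ t in Ioi (0:ℝ), ∫⁻ z, Φ (z, t) := h2
      _ = ∫⁻ t in Ioi (0:ℝ), ENNReal.ofReal (Real.exp (-t) * t ^ s) * I := by
          refine setLIntegral_congr_fun measurableSet_Ioi (fun t htt => ?_)
          rw [h3 t, hscale t htt, ENNReal.ofReal_mul (Real.exp_pos _).le, mul_assoc]
      _ = (∫⁻ t in Ioi (0:ℝ), ENNReal.ofReal (Real.exp (-t) * t ^ s)) * I :=
          lintegral_mul_const _ (by fun_prop)
      _ = ENNReal.ofReal (Real.Gamma (s + 1)) * I := by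
          congr 1
          have hGam : Real.Gamma (s + 1) = ∫ t in Ioi (0:ℝ), Real.exp (-t) * t ^ s := by
            rw [Real.Gamma_eq_integral (by linarith : (0:ℝ) < s + 1), add_sub_cancel_right]
          rw [hGam, ofReal_integral_eq_lintegral_ofReal
            (by simpa [add_sub_cancel_right, IntegrableOn] using
              Real.GammaIntegral_convergent (by linarith : (0:ℝ) < s + 1))
            (ae_restrict_of_forall_mem measurableSet_Ioi fun t htt =>
              mul_nonneg (Real.exp_pos _).le (Real.rpow_nonneg (le_of_lt htt) _))]
  have hJ2 : J = ENNReal.ofReal (∏ i, (Real.pi / (m i : ℝ)) * Real.Gamma (a i)) := by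
    have hprod : ∀ z : Fin n → ℂ, F z * Real.exp (-(g z)) =
        ∏ i, (‖z i‖ ^ (2 * α i) * Real.exp (-(‖z i‖ ^ (2 * m i)))) := by
      intro z
      rw [hF, hgdef, Finset.prod_mul_distrib]
      congr 1
      rw [← Real.exp_sum]
      congr 1
      rw [← Finset.sum_neg_distrib]
    have hInt : Integrable (fun z : Fin n → ℂ =>
        ∏ i, (‖z i‖ ^ (2 * α i) * Real.exp (-(‖z i‖ ^ (2 * m i))))) :=
      Integrable.fintype_prod (𝕜 := ℝ) (f := fun i (x : ℂ) =>
        ‖x‖ ^ (2 * α i) * Real.exp (-(‖x‖ ^ (2 * m i))))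
        fun i => aux_integrable (α i) (m i) (hm i)
    have hJ' : J = ENNReal.ofReal (∫ z, F z * Real.exp (-(g z))) := by
      rw [ofReal_integral_eq_lintegral_ofReal
        (hInt.congr (Filter.Eventually.of_forall fun z => (hprod z).symm))
        (Filter.Eventually.of_forall fun z => mul_nonneg (hF0 z) (Real.exp_pos _).le)]
      rw [hJ]
      congr 1 with z
      rw [hG, ENNReal.ofReal_mul (hF0 z)]
    rw [hJ']
    congr 1
    calc ∫ z : Fin n → ℂ, F z * Real.exp (-(g z))
        = ∫ z : Fin n → ℂ,
          ∏ i, (‖z i‖ ^ (2 * α i) * Real.exp (-(‖z i‖ ^ (2 * m i)))) := by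
          exact integral_congr_ae (Filter.Eventually.of_forall fun z => hprod z)
      _ = ∏ i, ∫ x : ℂ, ‖x‖ ^ (2 * α i) * Real.exp (-(‖x‖ ^ (2 * m i))) :=
          integral_fintype_prod_eq_prod (𝕜 := ℝ) (fun i (x : ℂ) =>
            ‖x‖ ^ (2 * α i) * Real.exp (-(‖x‖ ^ (2 * m i))))
      _ = ∏ i, (Real.pi / (m i : ℝ)) * Real.Gamma (a i) :=
          Finset.prod_congr rfl fun i _ => aux_intC (α i) (m i) (hm i)
  -- solve for I
  have hΓpos : 0 < Real.Gamma (s + 1) := Real.Gamma_pos_of_pos (by linarith)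
  have hIeq : I = ENNReal.ofReal (∏ i, (Real.pi / (m i : ℝ)) * Real.Gamma (a i)) /
      ENNReal.ofReal (Real.Gamma (s + 1)) := by
    rw [ENNReal.eq_div_iff (by simp [hΓpos]) ENNReal.ofReal_ne_top]
    rw [← hJ1, hJ2]
  -- convert LHS
  have hLHS : ∫ z : Fin n → ℂ in {z : Fin n → ℂ | ∑ i, ‖z i‖ ^ (2 * m i) < 1},
      ‖∏ i, z i ^ α i‖ ^ 2 = I.toReal := by
    have hptwise : ∀ z : Fin n → ℂ, ‖∏ i, z i ^ α i‖ ^ 2 = F z := by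
      intro z
      rw [norm_prod, ← Finset.prod_pow]
      exact Finset.prod_congr rfl fun i _ => by rw [norm_pow, ← pow_mul, mul_comm (α i) 2]
    calc ∫ z : Fin n → ℂ in {z : Fin n → ℂ | ∑ i, ‖z i‖ ^ (2 * m i) < 1},
        ‖∏ i, z i ^ α i‖ ^ 2
        = ∫ z : Fin n → ℂ in {z | g z < 1}, F z :=
          setIntegral_congr_fun (hmeas 1) fun z _ => hptwise z
      _ = I.toReal := by
          rw [hI, integral_eq_lintegral_of_nonneg_ae (ae_of_all _ hF0)
            hFc.aestronglyMeasurable.restrict]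
  rw [hLHS, hIeq, ENNReal.toReal_div, ENNReal.toReal_ofReal
      (Finset.prod_nonneg fun i _ => mul_nonneg (by positivity)
        (Real.Gamma_pos_of_pos (div_pos (by positivity) (by exact_mod_cast hm i))).le),
    ENNReal.toReal_ofReal hΓpos.le]
  -- final arithmetic
  have hm0' : (∏ i, (m i : ℝ)) ≠ 0 :=
    Finset.prod_ne_zero_iff.mpr fun i _ => Nat.cast_ne_zero.mpr (hm i).ne'
  rw [Finset.prod_mul_distrib, Finset.prod_div_distrib, Finset.prod_const,
    Finset.card_univ, Fintype.card_fin]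
  field_simp
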